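/- arXiv:2107.11035 — 2 statements merged into one kernel-verified Lean document; each statement's English description precedes it below -/
import Mathlib

section
/- Let u ∈ H¹₀(Ω) solve −Δu = f with u = 0 on ∂Ω, and let z ∈ H¹₀(Ω) ∩ H²(Ω) solve the adjoint problem −Δz = j in Ω, z = 0 on ∂Ω, where j ∈ L²(Ω) represents the goal functional J(v) = (j, v). Then for any u_N ∈ H¹(Ω) ∩ H²(Ω) that need not vanish on ∂Ω, the error identity J(u − u_N) = (f, z) − (∇u_N, ∇z) + ⟨∂_n z, u_N⟩_{∂Ω} holds. -/
/-- Error identity for a nonconforming (neural network)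
approximation u_N that need not vanish on the boundary:
J(u - u_N) = (f, z) - (∇u_N, ∇z) + ⟨∂ₙz, u_N⟩_{∂Ω}. -/
theorem network_error_identity_laplace
    {V B : Type*} [AddCommGroup V] [Module ℝ V] [AddCommGroup B] [Module ℝ B]
    (gip l2ip : V →ₗ[ℝ] V →ₗ[ℝ] ℝ)
    (binner : B →ₗ[ℝ] B →ₗ[ℝ] ℝ)
    (hgsymm : ∀ u v : V, gip u v = gip v u)
    (hl2symm : ∀ u v : V, l2ip u v = l2ip v u)
    (H2 : Set V) (tr dn : V →ₗ[ℝ] B)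
    (negΔ : V →ₗ[ℝ] V)
    (hGreen : ∀ w ∈ H2, ∀ φ : V,
      gip w φ = l2ip (negΔ w) φ + binner (dn w) (tr φ))
    (u z f j : V)
    (hu2 : u ∈ H2) (hz2 : z ∈ H2)
    (hu0 : tr u = 0) (hz0 : tr z = 0)
    (hueq : negΔ u = f) (hzeq : negΔ z = j)
    (uN : V) (huN : uN ∈ H2) :
    l2ip j (u - uN) = l2ip f z - gip uN z + binner (dn z) (tr uN) := by
  have hzu := hGreen z hz2 u
  have hzuN := hGreen z hz2 uN
  have huz := hGreen u hu2 z
  rw [hzeq] at hzu hzuN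
  rw [hueq, hz0] at huz
  rw [hu0] at hzu
  simp only [map_zero, LinearMap.zero_apply, add_zero] at huz hzu
  have h1 : l2ip j u = gip z u := hzu.symm
  have h2 : l2ip j uN = gip z uN - binner (dn z) (tr uN) := by
    rw [hzuN]; ring
  have : l2ip j (u - uN) = l2ip j u - l2ip j uN := by simp
  rw [this, h1, h2, hgsymm z u, huz, hgsymm z uN]
  ring
end

section
/- Let (v, p) solve the Stokes problem div v = 0, −Δv + ∇p = f in Ω, v = 0 on ∂Ω, and let (z, q) solve the adjoint Stokes problem div z = 0, −Δz − ∇q = j in Ω, z = 0 on ∂Ω, where j ∈ L²(Ω)² represents a goal functional J(φ) = (j, φ). Then for any v_N ∈ H¹(Ω)² ∩ H²(Ω)² (not necessarily divergence free or vanishing on ∂Ω), one has J(v − v_N) = (f, z) − (∇v_N, ∇z) − (div v_N, q) + ⟨∂_n z + q n, v_N⟩_{∂Ω}. -/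
/-- Error identity for a nonconforming approximation v_N of the
Stokes problem:
J(v - v_N) = (f,z) - (∇v_N,∇z) - (div v_N, q) + ⟨∂ₙz + qn, v_N⟩_{∂Ω}. -/
theorem stokes_network_error_identity
    {V Q B : Type*} [AddCommGroup V] [Module ℝ V] [AddCommGroup Q] [Module ℝ Q]
    [AddCommGroup B] [Module ℝ B]
    (gip l2ip : V →ₗ[ℝ] V →ₗ[ℝ] ℝ)
    (qip : Q →ₗ[ℝ] Q →ₗ[ℝ] ℝ)        -- (·,·)_{L²(Ω)} on scalar fields
    (binner : B →ₗ[ℝ] B →ₗ[ℝ] ℝ)     -- ⟨·,·⟩_{L²(∂Ω)}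
    (hgsymm : ∀ u v : V, gip u v = gip v u)
    (hl2symm : ∀ u v : V, l2ip u v = l2ip v u)
    (H2 : Set V)
    (tr dn : V →ₗ[ℝ] B)              -- trace and normal derivative
    (qn : Q →ₗ[ℝ] B)                 -- q ↦ q n on the boundary
    (negΔ : V →ₗ[ℝ] V) (gradp : Q →ₗ[ℝ] V) (dv : V →ₗ[ℝ] Q)
    (hGreen : ∀ w ∈ H2, ∀ φ : V,
      gip w φ = l2ip (negΔ w) φ + binner (dn w) (tr φ))
    (hIBP : ∀ (q : Q) (φ : V),
      l2ip (gradp q) φ = -(qip q (dv φ)) + binner (qn q) (tr φ))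
    (f j v z vN : V) (p q : Q)
    (hv2 : v ∈ H2) (hz2 : z ∈ H2) (hvN2 : vN ∈ H2)
    (hvdiv : dv v = 0) (hzdiv : dv z = 0)
    (hv0 : tr v = 0) (hz0 : tr z = 0)
    (hveq : negΔ v + gradp p = f)
    (hzeq : negΔ z - gradp q = j) :
    l2ip j (v - vN) =
      l2ip f z - gip vN z - qip q (dv vN) + binner (dn z + qn q) (tr vN) := by
  have hjφ : ∀ φ : V, l2ip j φ = l2ip (negΔ z) φ - l2ip (gradp q) φ := by
    intro φ; rw [← hzeq, map_sub]; simp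
  have e1 := hGreen z hz2 v
  rw [hv0] at e1; simp at e1
  have e2 := hIBP q v
  rw [hv0, hvdiv] at e2; simp at e2
  have e3 := hGreen v hv2 z
  rw [hz0] at e3; simp at e3
  have e4 := hIBP p z
  rw [hz0, hzdiv] at e4; simp at e4
  have hnegv : negΔ v = f - gradp p := by rw [← hveq]; abel
  have e5 : l2ip (negΔ v) z = l2ip f z - l2ip (gradp p) z := by
    rw [hnegv, map_sub]; simp
  have hjv : l2ip j v = l2ip f z := by
    rw [hjφ v, e2, hgsymm z v] at *
    rw [← e1, e3, e5, e4]; ring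
  have e6 := hGreen z hz2 vN
  have e7 := hIBP q vN
  have hjvN : l2ip j vN = gip vN z - binner (dn z) (tr vN) + qip q (dv vN)
      - binner (qn q) (tr vN) := by
    rw [hjφ vN, e7, hgsymm vN z, e6]; ring
  have hsum : binner (dn z + qn q) (tr vN)
      = binner (dn z) (tr vN) + binner (qn q) (tr vN) := by
    rw [map_add]; simp
  rw [map_sub, hjv, hjvN, hsum]; ring
end
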